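/- For all integers r, f ≥ 0, the one-row flagged factorial Q-function satisfies Q_{(r),(f)}(x;z|b) = Σ_{k=0}^{f} q_{r−k}^{[r−k−1]}(x|b) · (e_k^{[f | k−f−1]}(z | τ^{k−r}b))^⋆, where ⋆ is the substitution b_{−i} ↦ −b_{i+1} for all i ≥ 0. The identity holds for every number n of x-variables. -/

import Mathlib

open Finset

noncomputable section

variable {R : Type*} [CommRing R]

/-- The formal power series `1/(1 - x·u)`. -/
def geomSeries (x : R) : PowerSeries R := PowerSeries.mk fun m => x ^ m

/-- `e_u^{[k]}(c)`: the power series `∏_{i=1}^k (1 + c_i u)` for `k ≥ 0`, and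
`∏_{i=1}^{-k} (1 - c_i u)⁻¹` for `k < 0`.  The sequence `c` is read at indices `1, 2, …`. -/
def eSer (k : ℤ) (c : ℕ → R) : PowerSeries R :=
  if 0 ≤ k then ∏ i ∈ Finset.range k.toNat, (1 + PowerSeries.C (c (i + 1)) * PowerSeries.X)
  else ∏ i ∈ Finset.range (-k).toNat, geomSeries (c (i + 1))

/-- `q_u(x) = ∏_{i=1}^n (1 + x_i u)/(1 - x_i u)`, with `n` x-variables. -/
def qSer (n : ℕ) (x : ℕ → R) : PowerSeries R :=
  ∏ i ∈ Finset.range n,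
    ((1 + PowerSeries.C (x (i + 1)) * PowerSeries.X) * geomSeries (x (i + 1)))

/-- The coefficient of `u^m` (`m : ℤ`) of a power series; zero when `m < 0`. -/
def coeffZ (m : ℤ) (φ : PowerSeries R) : R :=
  if 0 ≤ m then PowerSeries.coeff m.toNat φ else 0

/-- `q_m^{[ℓ]}(x|c)`: the coefficient of `u^m` in `q_u(x)·e_u^{[ℓ]}(c)`. -/
def qC (m ℓ : ℤ) (n : ℕ) (x c : ℕ → R) : R := coeffZ m (qSer n x * eSer ℓ c)

/-- `q_m^{[k|ℓ]}(x;z|c)`: the coefficient of `u^m` in `q_u(x)·e_u^{[k]}(z)·e_u^{[ℓ]}(c)`. -/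
def qC2 (m k ℓ : ℤ) (n : ℕ) (x z c : ℕ → R) : R :=
  coeffZ m (qSer n x * eSer k z * eSer ℓ c)

/-- `e_m^{[k]}(c)`. -/
def eC (m k : ℤ) (c : ℕ → R) : R := coeffZ m (eSer k c)

/-- `e_m^{[k|ℓ]}(z|c)`: the coefficient of `u^m` in `e_u^{[k]}(z)·e_u^{[ℓ]}(c)`. -/
def eC2 (m k ℓ : ℤ) (z c : ℕ → R) : R := coeffZ m (eSer k z * eSer ℓ c)

/-- Extension of `b` to all integer indices using the convention `b_{-i} = -b_{i+1}` for
`i ≥ 0`; positive indices are untouched.  This also implements the `⋆` substitution. -/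
def bext (b : ℤ → R) : ℤ → R := fun j => if 0 < j then b j else -b (1 - j)

/-- `ε(0) = 1` and `ε(m) = 2·(-1)^m` for `m ≥ 1`. -/
def pfEps (m : ℕ) : ℤ := if m = 0 then 1 else 2 * (-1) ^ m

/-- The subscript `α_i + Σ_{j>i} m_{ij} − Σ_{j<i} m_{ji}` in the Schur–Pfaffian. -/
def pfIdx {r : ℕ} (α : Fin r → ℤ) (m : Fin r → Fin r → ℕ) (i : Fin r) : ℤ :=
  α i + ∑ j, (if i < j then (m i j : ℤ) else 0) - ∑ j, (if j < i then (m j i : ℤ) else 0)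

/-- The Schur–Pfaffian `Pf[c^{(1)}_{α_1} ⋯ c^{(r)}_{α_r}]`, as the (finitely supported) sum
over tuples of nonnegative integers `(m_{ij})_{1 ≤ i < j ≤ r}`. -/
def schurPf {r : ℕ} (c : Fin r → ℤ → R) (α : Fin r → ℤ) : R :=
  ∑ᶠ m ∈ {m : Fin r → Fin r → ℕ | ∀ i j, ¬ i < j → m i j = 0},
    (∏ i, ∏ j, if i < j then (pfEps (m i j) : R) else 1) * ∏ i, c i (pfIdx α m i)

/-- The alphabet of primed, unmarked and circled numbers. -/
inductive MSTEntry where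
  | prime : ℕ → MSTEntry
  | unmarked : ℕ → MSTEntry
  | circ : ℕ → MSTEntry
deriving DecidableEq

namespace MSTEntry

/-- Whether an entry is circled (`1`) or not (`0`). -/
def isCirc : MSTEntry → ℕ
  | circ _ => 1
  | _ => 0

/-- Key realizing the order `1' < 1 < 2' < 2 < ⋯` within each class. -/
def key : MSTEntry → ℕ
  | prime k => 2 * k - 1
  | unmarked k => 2 * k
  | circ k => k

/-- The numeric value of an entry. -/
def val : MSTEntry → ℕ
  | prime k => k
  | unmarked k => k
  | circ k => k

/-- The total order `1' < 1 < 2' < 2 < ⋯ < 1° < 2° < ⋯` on entries of positive value. -/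
def le (a b : MSTEntry) : Prop :=
  a.isCirc < b.isCirc ∨ (a.isCirc = b.isCirc ∧ a.key ≤ b.key)

end MSTEntry

/-- The shifted Young diagram of a strict partition `λ` of length `r`:
boxes `(i, j)` with `1 ≤ i ≤ r` and `i ≤ j ≤ λ_i + i - 1` (rows and columns 1-indexed). -/
def shiftedDiag (r : ℕ) (lam : ℕ → ℕ) : Set (ℕ × ℕ) :=
  {p | 1 ≤ p.1 ∧ p.1 ≤ r ∧ p.1 ≤ p.2 ∧ p.2 ≤ lam p.1 + p.1 - 1}

/-- `T` is a marked shifted tableau of the flagged strict partition `(λ, f)` whose unmarked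
and primed entries have numeric value at most `n` (normalized to `unmarked 0` off the
diagram). -/
def IsMST (n r : ℕ) (lam f : ℕ → ℕ) (T : ℕ × ℕ → MSTEntry) : Prop :=
  (∀ p, p ∉ shiftedDiag r lam → T p = .unmarked 0) ∧
  (∀ p ∈ shiftedDiag r lam, 1 ≤ (T p).val) ∧
  (∀ i j j', (i, j) ∈ shiftedDiag r lam → (i, j') ∈ shiftedDiag r lam → j ≤ j' →
    (T (i, j)).le (T (i, j'))) ∧
  (∀ i i' j, (i, j) ∈ shiftedDiag r lam → (i', j) ∈ shiftedDiag r lam → i ≤ i' →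
    (T (i, j)).le (T (i', j))) ∧
  (∀ i i' j k k', (i, j) ∈ shiftedDiag r lam → (i', j) ∈ shiftedDiag r lam → i < i' →
    T (i, j) = .unmarked k → T (i', j) = .unmarked k' → k < k') ∧
  (∀ i j j' k k', (i, j) ∈ shiftedDiag r lam → (i, j') ∈ shiftedDiag r lam → j < j' →
    T (i, j) = .prime k → T (i, j') = .prime k' → k < k') ∧
  (∀ i j j' k k', (i, j) ∈ shiftedDiag r lam → (i, j') ∈ shiftedDiag r lam → j < j' →
    T (i, j) = .circ k → T (i, j') = .circ k' → k < k') ∧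
  (∀ p ∈ shiftedDiag r lam, (T p).le (.circ (f p.1))) ∧
  (∀ p ∈ shiftedDiag r lam, ∀ k, (T p = .unmarked k ∨ T p = .prime k) → k ≤ n)

/-- The factor of the weight `(xz|b)^T` contributed by the entry at box `p`.  The convention
`b_{-i} = -b_{i+1}` is implemented by `bext`. -/
def mstFactor (x z : ℕ → R) (b : ℤ → R) (p : ℕ × ℕ) : MSTEntry → R
  | .unmarked k => x k + bext b ((p.2 : ℤ) - (p.1 : ℤ))
  | .prime k => x k - bext b ((p.2 : ℤ) - (p.1 : ℤ))
  | .circ k => z k + bext b ((k : ℤ) + (p.1 : ℤ) - (p.2 : ℤ))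

/-- The weight `(xz|b)^T` of a marked shifted tableau. -/
def mstWeight (r : ℕ) (lam : ℕ → ℕ) (x z : ℕ → R) (b : ℤ → R) (T : ℕ × ℕ → MSTEntry) : R :=
  ∏ i ∈ Finset.range r, ∏ j ∈ Finset.range (lam (i + 1)),
    mstFactor x z b (i + 1, i + 1 + j) (T (i + 1, i + 1 + j))

/-- The flagged factorial Q-function `Q_{λ,f}(x;z|b)`, with `n` x-variables. -/
def Qflag (n r : ℕ) (lam f : ℕ → ℕ) (x z : ℕ → R) (b : ℤ → R) : R :=
  ∑ᶠ T ∈ {T : ℕ × ℕ → MSTEntry | IsMST n r lam f T}, mstWeight r lam x z b T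

/-- Ivanov's factorial Q-function `Q_λ(x|b)`: the case of the zero flag (no circled
entries, so the z-variables do not occur). -/
def QIvanov (n r : ℕ) (lam : ℕ → ℕ) (x : ℕ → R) (b : ℤ → R) : R :=
  Qflag n r lam (fun _ => 0) x (fun _ => 0) b

/-- The skew Young diagram `κ/ν`: boxes `(i, j)` with `1 ≤ i ≤ r`, `ν_i < j ≤ κ_i`. -/
def skewDiag (r : ℕ) (kap nu : ℕ → ℕ) : Set (ℕ × ℕ) :=
  {p | 1 ≤ p.1 ∧ p.1 ≤ r ∧ nu p.1 < p.2 ∧ p.2 ≤ kap p.1}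

/-- `t` is a row-strict flagged tableau of `(κ/ν, f)` (normalized to `0` off the diagram). -/
def IsRST (r : ℕ) (kap nu f : ℕ → ℕ) (t : ℕ × ℕ → ℕ) : Prop :=
  (∀ p, p ∉ skewDiag r kap nu → t p = 0) ∧
  (∀ p ∈ skewDiag r kap nu, 1 ≤ t p) ∧
  (∀ i j j', (i, j) ∈ skewDiag r kap nu → (i, j') ∈ skewDiag r kap nu → j < j' →
    t (i, j) < t (i, j')) ∧
  (∀ i i' j, (i, j) ∈ skewDiag r kap nu → (i', j) ∈ skewDiag r kap nu → i ≤ i' →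
    t (i, j) ≤ t (i', j)) ∧
  (∀ p ∈ skewDiag r kap nu, t p ≤ f p.1)

/-- The weight `∏_{e ∈ T} (z_{|e|} + b_{|e| + r(e) - c(e)})` of a row-strict flagged tableau. -/
def rstWeight (r : ℕ) (kap nu : ℕ → ℕ) (z : ℕ → R) (b : ℤ → R) (t : ℕ × ℕ → ℕ) : R :=
  ∏ i ∈ Finset.range r, ∏ j ∈ Finset.range (kap (i + 1) - nu (i + 1)),
    (z (t (i + 1, nu (i + 1) + 1 + j)) +
      b ((t (i + 1, nu (i + 1) + 1 + j) : ℤ) + ((i : ℤ) + 1) - ((nu (i + 1) : ℤ) + 1 + (j : ℤ))))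

/-- The row-strict flagged skew factorial Schur polynomial `s̃_{κ/ν,f}(z|b)`. -/
def sTilde (r : ℕ) (kap nu f : ℕ → ℕ) (z : ℕ → R) (b : ℤ → R) : R :=
  ∑ᶠ t ∈ {t : ℕ × ℕ → ℕ | IsRST r kap nu f t}, rstWeight r kap nu z b t


namespace Aux5

open PowerSeries Finset

variable {R : Type*} [CommRing R]

lemma coeff_geomSeries (x : R) (m : ℕ) : PowerSeries.coeff m (geomSeries x) = x ^ m := by
  simp [geomSeries]

lemma geomSeries_eq (x : R) :
    geomSeries x = 1 + PowerSeries.C x * PowerSeries.X * geomSeries x := by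
  ext m
  cases m with
  | zero =>
      simp [coeff_geomSeries, mul_assoc, PowerSeries.coeff_zero_eq_constantCoeff,
        PowerSeries.coeff_one]
  | succ m =>
      rw [map_add, PowerSeries.coeff_one, mul_assoc, PowerSeries.coeff_C_mul,
        PowerSeries.coeff_succ_X_mul, coeff_geomSeries, coeff_geomSeries, pow_succ,
        if_neg (by omega : ¬ m + 1 = 0)]
      ring

/-- `1 + c u`. -/
def onePlus (c : R) : PowerSeries R := 1 + PowerSeries.C c * PowerSeries.X

/-- `∏_{i=1}^p (1 + c_i u)`. -/
def EP (c : ℕ → R) (p : ℕ) : PowerSeries R := ∏ i ∈ Finset.range p, onePlus (c (i + 1))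

/-- `∏_{i=1}^p (1 - c_i u)⁻¹`. -/
def GP (c : ℕ → R) (p : ℕ) : PowerSeries R := ∏ i ∈ Finset.range p, geomSeries (c (i + 1))

lemma coeff_onePlus_mul (c : R) (φ : PowerSeries R) (m : ℕ) :
    PowerSeries.coeff (m + 1) (onePlus c * φ) =
      PowerSeries.coeff (m + 1) φ + c * PowerSeries.coeff m φ := by
  have h : onePlus c * φ = φ + PowerSeries.C c * (PowerSeries.X * φ) := by
    rw [onePlus]; ring
  rw [h, map_add, PowerSeries.coeff_C_mul, PowerSeries.coeff_succ_X_mul]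

lemma coeff_zero_mul (φ ψ : PowerSeries R) :
    PowerSeries.coeff 0 (φ * ψ) = PowerSeries.coeff 0 φ * PowerSeries.coeff 0 ψ := by
  simp [PowerSeries.coeff_zero_eq_constantCoeff]

lemma coeff_geom_mul (x : R) (φ : PowerSeries R) (m : ℕ) :
    PowerSeries.coeff (m + 1) (geomSeries x * φ) =
      PowerSeries.coeff (m + 1) φ + x * PowerSeries.coeff m (geomSeries x * φ) := by
  have h : geomSeries x * φ = φ + PowerSeries.C x * (PowerSeries.X * (geomSeries x * φ)) := by
    conv_lhs => rw [geomSeries_eq x]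
    ring
  conv_lhs => rw [h]
  rw [map_add, PowerSeries.coeff_C_mul, PowerSeries.coeff_succ_X_mul]

lemma coeff_prod_onePlus (c : ℕ → R) :
    ∀ p m : ℕ, p < m → PowerSeries.coeff m (∏ i ∈ Finset.range p, onePlus (c i)) = 0 := by
  intro p
  induction p with
  | zero =>
      intro m hm
      obtain ⟨m', rfl⟩ : ∃ m', m = m' + 1 := ⟨m - 1, by omega⟩
      simp [PowerSeries.coeff_one]
  | succ p ih =>
      intro m hm
      obtain ⟨m', rfl⟩ : ∃ m', m = m' + 1 := ⟨m - 1, by omega⟩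
      rw [Finset.prod_range_succ, mul_comm, coeff_onePlus_mul, ih (m' + 1) (by omega),
        ih m' (by omega), mul_zero, add_zero]

lemma constantCoeff_qSer (n : ℕ) (x : ℕ → R) :
    PowerSeries.coeff 0 (qSer n x) = 1 := by
  rw [qSer]
  rw [PowerSeries.coeff_zero_eq_constantCoeff, map_prod]
  apply Finset.prod_eq_one
  intro i _
  have hg : (PowerSeries.constantCoeff) (geomSeries (x (i + 1))) = 1 := by
    rw [← PowerSeries.coeff_zero_eq_constantCoeff, coeff_geomSeries, pow_zero]
  rw [map_mul, map_add, map_one, hg, map_mul, PowerSeries.constantCoeff_X, mul_zero, add_zero,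
    one_mul]

/-- `Φ_n(p) = q_p^{[p-1]}(x|c)`. -/
def Phi (n : ℕ) (x c : ℕ → R) (p : ℕ) : R :=
  PowerSeries.coeff p (qSer n x * EP c (p - 1))

lemma Phi_zero (n : ℕ) (x c : ℕ → R) : Phi n x c 0 = 1 := by
  rw [Phi]
  show PowerSeries.coeff 0 _ = 1
  rw [coeff_zero_mul, constantCoeff_qSer]
  simp [EP]

lemma Phi_nil (x c : ℕ → R) (m : ℕ) : Phi 0 x c (m + 1) = 0 := by
  rw [Phi, qSer, Finset.range_zero, Finset.prod_empty, one_mul, Nat.add_sub_cancel, EP]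
  exact coeff_prod_onePlus _ m (m + 1) (by omega)

lemma lemL (H : PowerSeries R) (a : R) (c : ℕ → R) :
    ∀ r : ℕ, PowerSeries.coeff r (geomSeries a * (H * EP c r)) =
      ∑ p ∈ Finset.range (r + 1),
        (∏ j ∈ Finset.Ico (p + 1) (r + 1), (a + c j)) * PowerSeries.coeff p (H * EP c (p - 1)) := by
  intro r
  induction r with
  | zero =>
      rw [coeff_zero_mul, coeff_geomSeries, pow_zero, one_mul,
        show (0:ℕ) + 1 = 1 from rfl, Finset.range_one, Finset.sum_singleton, Finset.Ico_self,
        Finset.prod_empty, one_mul]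
  | succ r ih =>
      have hEP : EP c (r + 1) = EP c r * onePlus (c (r + 1)) := Finset.prod_range_succ _ _
      have e1 : geomSeries a * (H * (EP c r * onePlus (c (r + 1)))) =
          onePlus (c (r + 1)) * (geomSeries a * (H * EP c r)) := by ring
      rw [hEP, e1, coeff_onePlus_mul, coeff_geom_mul, ih]
      have hPhi : PowerSeries.coeff (r + 1) (H * EP c r) =
          PowerSeries.coeff (r + 1) (H * EP c ((r + 1) - 1)) := by norm_num
      rw [Finset.sum_range_succ (n := r + 1)]
      rw [Finset.Ico_self, Finset.prod_empty, one_mul]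
      have hsum : ∀ p ∈ Finset.range (r + 1),
          (∏ j ∈ Finset.Ico (p + 1) (r + 1 + 1), (a + c j)) * PowerSeries.coeff p (H * EP c (p - 1)) =
          (a + c (r + 1)) * ((∏ j ∈ Finset.Ico (p + 1) (r + 1), (a + c j)) *
            PowerSeries.coeff p (H * EP c (p - 1))) := by
        intro p hp
        have hp' := Finset.mem_range.mp hp
        rw [Finset.prod_Ico_succ_top (by omega : p + 1 ≤ r + 1)]
        ring
      rw [Finset.sum_congr rfl hsum, ← Finset.mul_sum]
      rw [hPhi]
      ring

lemma onePlus_mul_geom (a : R) :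
    onePlus a * geomSeries a = 1 + PowerSeries.C (2 * a) * (PowerSeries.X * geomSeries a) := by
  have h := geomSeries_eq a
  rw [onePlus]
  calc (1 + PowerSeries.C a * PowerSeries.X) * geomSeries a
      = geomSeries a + PowerSeries.C a * PowerSeries.X * geomSeries a := by ring
    _ = 1 + PowerSeries.C a * PowerSeries.X * geomSeries a +
          PowerSeries.C a * PowerSeries.X * geomSeries a := by rw [← h]
    _ = 1 + PowerSeries.C (2 * a) * (PowerSeries.X * geomSeries a) := by
          have h2 : PowerSeries.C (2 * a) = PowerSeries.C a + PowerSeries.C a := by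
            rw [two_mul, map_add]
          rw [h2]; ring

lemma Phi_succ (n : ℕ) (x c : ℕ → R) (r : ℕ) :
    Phi (n + 1) x c (r + 1) = Phi n x c (r + 1) +
      2 * x (n + 1) * ∑ p ∈ Finset.range (r + 1),
        (∏ j ∈ Finset.Ico (p + 1) (r + 1), (x (n + 1) + c j)) * Phi n x c p := by
  have hq : qSer (n + 1) x = qSer n x *
      ((1 + PowerSeries.C (x (n + 1)) * PowerSeries.X) * geomSeries (x (n + 1))) :=
    Finset.prod_range_succ _ _
  set a := x (n + 1)
  have h2 : qSer (n + 1) x * EP c ((r + 1) - 1) =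
      qSer n x * EP c r + PowerSeries.C (2 * a) *
        (PowerSeries.X * (geomSeries a * (qSer n x * EP c r))) := by
    rw [hq]
    have : (1 + PowerSeries.C a * PowerSeries.X) * geomSeries a =
        1 + PowerSeries.C (2 * a) * (PowerSeries.X * geomSeries a) := onePlus_mul_geom a
    rw [Nat.add_sub_cancel]
    calc qSer n x * ((1 + PowerSeries.C a * PowerSeries.X) * geomSeries a) * EP c r
        = (1 + PowerSeries.C a * PowerSeries.X) * geomSeries a * (qSer n x * EP c r) := by ring
      _ = (1 + PowerSeries.C (2 * a) * (PowerSeries.X * geomSeries a)) *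
            (qSer n x * EP c r) := by rw [this]
      _ = _ := by ring
  rw [Phi, h2, map_add, PowerSeries.coeff_C_mul, PowerSeries.coeff_succ_X_mul, lemL]
  simp only [Phi, Nat.add_sub_cancel, Finset.mul_sum]


lemma constantCoeff_EP (c : ℕ → R) (p : ℕ) : PowerSeries.coeff 0 (EP c p) = 1 := by
  rw [PowerSeries.coeff_zero_eq_constantCoeff, EP, map_prod]
  apply Finset.prod_eq_one
  intro i _
  rw [onePlus, map_add, map_one, map_mul, PowerSeries.constantCoeff_X, mul_zero, add_zero]

lemma constantCoeff_GP (c : ℕ → R) (p : ℕ) : PowerSeries.coeff 0 (GP c p) = 1 := by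
  rw [PowerSeries.coeff_zero_eq_constantCoeff, GP, map_prod]
  apply Finset.prod_eq_one
  intro i _
  rw [← PowerSeries.coeff_zero_eq_constantCoeff, coeff_geomSeries, pow_zero]

/-- coefficient of `u^k` in `E_f(z)·G_{f+1-k}(c)`. -/
def PsiV (k f : ℕ) (z c : ℕ → R) : R :=
  PowerSeries.coeff k (EP z f * GP c (f + 1 - k))

lemma PsiV_zero (f : ℕ) (z c : ℕ → R) : PsiV 0 f z c = 1 := by
  rw [PsiV, coeff_zero_mul, constantCoeff_EP, constantCoeff_GP, one_mul]

lemma PsiV_top (f : ℕ) (z c : ℕ → R) : PsiV (f + 1) f z c = 0 := by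
  rw [PsiV, show f + 1 - (f + 1) = 0 by omega, GP, Finset.range_zero, Finset.prod_empty,
    mul_one, EP]
  exact coeff_prod_onePlus _ f (f + 1) (by omega)

lemma PsiV_rec (z c : ℕ → R) (f k : ℕ) (hk : k ≤ f) :
    PsiV (k + 1) (f + 1) z c =
      PsiV (k + 1) f z c + (z (f + 1) + c (f + 1 - k)) * PsiV k f z c := by
  have hA : EP z (f + 1) = EP z f * onePlus (z (f + 1)) := Finset.prod_range_succ _ _
  have hB : GP c (f + 1 - k) = GP c (f - k) * geomSeries (c (f + 1 - k)) := by
    rw [show f + 1 - k = (f - k) + 1 by omega, GP, Finset.prod_range_succ,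
      show f - k + 1 = f + 1 - k by omega]
    rfl
  have e1 : EP z (f + 1) * GP c (f + 1 + 1 - (k + 1)) =
      onePlus (z (f + 1)) * (EP z f * GP c (f + 1 - k)) := by
    rw [hA, show f + 1 + 1 - (k + 1) = f + 1 - k by omega]; ring
  have e2 : EP z f * GP c (f + 1 - k) =
      geomSeries (c (f + 1 - k)) * (EP z f * GP c (f - k)) := by
    rw [hB]; ring
  simp only [PsiV]
  rw [e1, coeff_onePlus_mul, e2, coeff_geom_mul, ← e2,
    show f + 1 - (k + 1) = f - k by omega]
  ring

lemma coeffZ_natCast (m : ℕ) (φ : PowerSeries R) : coeffZ (m : ℤ) φ = PowerSeries.coeff m φ := by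
  rw [coeffZ, if_pos (Int.natCast_nonneg m), Int.toNat_natCast]

lemma coeffZ_of_neg {m : ℤ} (h : m < 0) (φ : PowerSeries R) : coeffZ m φ = 0 :=
  if_neg (by omega)

lemma eSer_natCast (c : ℕ → R) (p : ℕ) : eSer (p : ℤ) c = EP c p := by
  rw [eSer, if_pos (Int.natCast_nonneg p), Int.toNat_natCast]; rfl

lemma eSer_negSub (c : ℕ → R) (k f : ℕ) (h : k ≤ f) :
    eSer ((k : ℤ) - f - 1) c = GP c (f + 1 - k) := by
  rw [eSer, if_neg (by omega), show (-((k : ℤ) - f - 1)).toNat = f + 1 - k by omega]; rfl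

lemma eC2_eq_PsiV (k f : ℕ) (h : k ≤ f) (z c : ℕ → R) :
    eC2 (k : ℤ) (f : ℤ) ((k : ℤ) - f - 1) z c = PsiV k f z c := by
  rw [eC2, eSer_natCast, eSer_negSub c k f h, coeffZ_natCast, PsiV]

lemma qC_eq (n : ℕ) (x c : ℕ → R) (r k : ℕ) :
    qC ((r : ℤ) - k) ((r : ℤ) - k - 1) n x c =
      if k ≤ r then Phi n x c (r - k) else 0 := by
  by_cases h : k ≤ r
  · rw [if_pos h]
    have hm : (r : ℤ) - k = ((r - k : ℕ) : ℤ) := by omega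
    rw [hm]
    cases hrk : r - k with
    | zero =>
        rw [qC, show ((0 : ℕ) : ℤ) - 1 = ((0 : ℕ) : ℤ) - ((0 : ℕ) : ℤ) - 1 by norm_num,
          eSer_negSub c 0 0 le_rfl, coeffZ_natCast, coeff_zero_mul, constantCoeff_qSer,
          constantCoeff_GP, one_mul, Phi_zero]
    | succ m' =>
        rw [qC, show ((m' + 1 : ℕ) : ℤ) - 1 = ((m' : ℕ) : ℤ) by push_cast; ring,
          eSer_natCast, coeffZ_natCast, Phi, Nat.add_sub_cancel]
  · rw [if_neg h, qC, coeffZ_of_neg (by omega)]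

/-- The right-hand side of the theorem, in normalized form. -/
def RHSf (n : ℕ) (x z : ℕ → R) (b : ℤ → R) (r f : ℕ) : R :=
  ∑ k ∈ Finset.range (f + 1),
    (if k ≤ r then Phi n x (fun i => b (i : ℤ)) (r - k) else 0) *
      PsiV k f z (fun i => bext b ((i : ℤ) + k - r))

lemma RHSf_r_zero (n : ℕ) (x z : ℕ → R) (b : ℤ → R) (f : ℕ) : RHSf n x z b 0 f = 1 := by
  rw [RHSf, Finset.sum_range_succ']
  have h1 : ∀ k ∈ Finset.range f,
      (if k + 1 ≤ 0 then Phi n x (fun i => b (i : ℤ)) (0 - (k + 1)) else 0) *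
        PsiV (k + 1) f z (fun i => bext b ((i : ℤ) + ((k + 1 : ℕ) : ℤ) - ((0 : ℕ) : ℤ))) = 0 := by
    intro k _
    rw [if_neg (by omega), zero_mul]
  rw [Finset.sum_congr rfl h1, Finset.sum_const, smul_zero, zero_add, if_pos le_rfl,
    Phi_zero, PsiV_zero, one_mul]

lemma RHSf_f_zero (n : ℕ) (x z : ℕ → R) (b : ℤ → R) (r : ℕ) :
    RHSf n x z b r 0 = Phi n x (fun i => b (i : ℤ)) r := by
  rw [RHSf, Finset.sum_range_one, if_pos (by omega), PsiV_zero, mul_one, Nat.sub_zero]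

lemma RHSf_rec (n : ℕ) (x z : ℕ → R) (b : ℤ → R) (r f : ℕ) :
    RHSf n x z b (r + 1) (f + 1) =
      RHSf n x z b (r + 1) f +
        (z (f + 1) + bext b ((f : ℤ) + 1 - r)) * RHSf n x z b r f := by
  have key : ∀ k ∈ Finset.range (f + 1),
      ((if k + 1 ≤ r + 1 then Phi n x (fun i => b (i : ℤ)) (r + 1 - (k + 1)) else 0) *
        PsiV (k + 1) (f + 1) z fun i => bext b ((i : ℤ) + ((k + 1 : ℕ) : ℤ) - ((r + 1 : ℕ) : ℤ))) =
      ((if k + 1 ≤ r + 1 then Phi n x (fun i => b (i : ℤ)) (r + 1 - (k + 1)) else 0) *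
        PsiV (k + 1) f z fun i => bext b ((i : ℤ) + ((k + 1 : ℕ) : ℤ) - ((r + 1 : ℕ) : ℤ))) +
      (z (f + 1) + bext b ((f : ℤ) + 1 - (r : ℤ))) *
        ((if k ≤ r then Phi n x (fun i => b (i : ℤ)) (r - k) else 0) *
          PsiV k f z fun i => bext b ((i : ℤ) + (k : ℤ) - (r : ℤ))) := by
    intro k hk
    have hkf : k ≤ f := by have := Finset.mem_range.mp hk; omega
    rw [PsiV_rec z _ f k hkf]
    have h1 : bext b (((f + 1 - k : ℕ) : ℤ) + ((k + 1 : ℕ) : ℤ) - ((r + 1 : ℕ) : ℤ)) =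
        bext b ((f : ℤ) + 1 - (r : ℤ)) := by
      congr 1
      have hc : ((f + 1 - k : ℕ) : ℤ) = (f : ℤ) + 1 - k := by omega
      rw [hc]; push_cast; ring
    rw [h1, mul_add]
    congr 1
    have h2 : (fun i : ℕ => bext b ((i : ℤ) + ((k + 1 : ℕ) : ℤ) - ((r + 1 : ℕ) : ℤ))) =
        (fun i : ℕ => bext b ((i : ℤ) + (k : ℤ) - (r : ℤ))) := by
      funext i; congr 1; push_cast; ring
    have h3 : (if k + 1 ≤ r + 1 then Phi n x (fun i => b (i : ℤ)) (r + 1 - (k + 1)) else 0) =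
        (if k ≤ r then Phi n x (fun i => b (i : ℤ)) (r - k) else 0) := by
      by_cases h : k ≤ r
      · rw [if_pos (by omega), if_pos h, show r + 1 - (k + 1) = r - k by omega]
      · rw [if_neg (by omega), if_neg h]
    rw [h2, h3]
    ring
  have e0 : RHSf n x z b (r + 1) f = (∑ k ∈ Finset.range f,
      (if k + 1 ≤ r + 1 then Phi n x (fun i => b (i : ℤ)) (r + 1 - (k + 1)) else 0) *
        PsiV (k + 1) f z fun i => bext b ((i : ℤ) + ((k + 1 : ℕ) : ℤ) - ((r + 1 : ℕ) : ℤ))) +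
      (if 0 ≤ r + 1 then Phi n x (fun i => b (i : ℤ)) (r + 1 - 0) else 0) *
        PsiV 0 f z (fun i => bext b ((i : ℤ) + ((0 : ℕ) : ℤ) - ((r + 1 : ℕ) : ℤ))) := by
    rw [RHSf]; exact Finset.sum_range_succ' _ f
  have e1 : RHSf n x z b r f = ∑ k ∈ Finset.range (f + 1),
      (if k ≤ r then Phi n x (fun i => b (i : ℤ)) (r - k) else 0) *
        PsiV k f z fun i => bext b ((i : ℤ) + (k : ℤ) - (r : ℤ)) := rfl
  rw [RHSf, Finset.sum_range_succ', Finset.sum_congr rfl key, Finset.sum_add_distrib,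
    Finset.sum_range_succ, PsiV_top, mul_zero, add_zero, ← Finset.mul_sum, e0, e1,
    PsiV_zero, PsiV_zero]
  ring

/-! ### Tableau side -/

lemma mem_shiftedDiag_one (r : ℕ) (p : ℕ × ℕ) :
    p ∈ shiftedDiag 1 (fun _ => r) ↔ p.1 = 1 ∧ 1 ≤ p.2 ∧ p.2 ≤ r := by
  simp only [shiftedDiag, Set.mem_setOf_eq]
  omega

lemma MSTEntry.le_rfl (e : MSTEntry) : e.le e := Or.inr ⟨rfl, le_refl _⟩

lemma circ_le_circ {k m : ℕ} : (MSTEntry.circ k).le (.circ m) ↔ k ≤ m := by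
  constructor
  · rintro (h | ⟨_, h⟩)
    · simp [MSTEntry.isCirc] at h
    · simpa [MSTEntry.key] using h
  · intro h
    exact Or.inr ⟨rfl, by simpa [MSTEntry.key] using h⟩

lemma noncirc_le_circ {k m : ℕ} :
    (MSTEntry.prime k).le (.circ m) ∧ (MSTEntry.unmarked k).le (.circ m) :=
  ⟨Or.inl (by simp [MSTEntry.isCirc]), Or.inl (by simp [MSTEntry.isCirc])⟩

/-- The set of one-row marked shifted tableaux. -/
def Sset (n r f : ℕ) : Set (ℕ × ℕ → MSTEntry) :=
  {T | IsMST n 1 (fun _ => r) (fun _ => f) T}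

lemma entry_mem {n r f : ℕ} {T : ℕ × ℕ → MSTEntry} (hT : T ∈ Sset n r f) {p : ℕ × ℕ}
    (hp : p ∈ shiftedDiag 1 (fun _ => r)) :
    (∃ k, 1 ≤ k ∧ k ≤ n ∧ (T p = .prime k ∨ T p = .unmarked k)) ∨
      (∃ k, 1 ≤ k ∧ k ≤ f ∧ T p = .circ k) := by
  obtain ⟨h1, h2, h3, h4, h5, h6, h7, h8, h9⟩ := hT
  have hval := h2 p hp
  have hflag := h8 p hp
  cases he : T p with
  | prime k =>
      left
      refine ⟨k, ?_, h9 p hp k (Or.inr he), Or.inl rfl⟩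
      rw [he] at hval; exact hval
  | unmarked k =>
      left
      refine ⟨k, ?_, h9 p hp k (Or.inl he), Or.inr rfl⟩
      rw [he] at hval; exact hval
  | circ k =>
      right
      refine ⟨k, ?_, ?_, rfl⟩
      · rw [he] at hval; exact hval
      · rw [he] at hflag; exact circ_le_circ.mp hflag

lemma Sset_finite (n r f : ℕ) : (Sset n r f).Finite := by
  classical
  set N := max n f with hN
  set EntF : Finset MSTEntry :=
    ((Finset.range (N + 1)).image MSTEntry.prime ∪
      (Finset.range (N + 1)).image MSTEntry.unmarked ∪
      (Finset.range (N + 1)).image MSTEntry.circ) with hEntF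
  have himg : ∀ T ∈ Sset n r f, ∀ j : Fin r, T (1, (j : ℕ) + 1) ∈ (EntF : Set MSTEntry) := by
    intro T hT j
    have hp : ((1 : ℕ), (j : ℕ) + 1) ∈ shiftedDiag 1 (fun _ => r) := by
      rw [mem_shiftedDiag_one]
      exact ⟨rfl, by omega, by omega⟩
    rcases entry_mem hT hp with ⟨k, _, hk, hk2 | hk2⟩ | ⟨k, _, hk, hk2⟩ <;>
      rw [hk2] <;> simp [hEntF] <;> omega
  apply Set.Finite.of_finite_image (f := fun T : ℕ × ℕ → MSTEntry => fun j : Fin r => T (1, (j : ℕ) + 1))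
  · apply Set.Finite.subset (Set.Finite.pi (fun _ : Fin r => EntF.finite_toSet))
    rintro g ⟨T, hT, rfl⟩
    intro j _
    exact himg T hT j
  · intro T hT T' hT' h
    funext p
    by_cases hp : p ∈ shiftedDiag 1 (fun _ => r)
    · obtain ⟨hp1, hp2, hp3⟩ := (mem_shiftedDiag_one r p).mp hp
      have hj : p = (1, ((⟨p.2 - 1, by omega⟩ : Fin r) : ℕ) + 1) := by
        apply Prod.ext
        · exact hp1
        · simp; omega
      rw [hj]
      exact congrFun h ⟨p.2 - 1, by omega⟩
    · rw [hT.1 p hp, hT'.1 p hp]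

lemma mstWeight_one_row (r : ℕ) (x z : ℕ → R) (b : ℤ → R) (T : ℕ × ℕ → MSTEntry) :
    mstWeight 1 (fun _ => r) x z b T =
      ∏ j ∈ Finset.range r, mstFactor x z b (1, 1 + j) (T (1, 1 + j)) := by
  rw [mstWeight, Finset.prod_range_one]

lemma Sset_r_zero (n f : ℕ) : Sset n 0 f = {fun _ => MSTEntry.unmarked 0} := by
  ext T
  constructor
  · intro hT
    have h1 := hT.1
    funext p
    exact h1 p (by rw [mem_shiftedDiag_one]; omega)
  · rintro rfl
    have hd : ∀ p : ℕ × ℕ, p ∉ shiftedDiag 1 (fun _ => 0) := by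
      intro p hp
      rw [mem_shiftedDiag_one] at hp; omega
    exact ⟨fun p _ => rfl, fun p hp => absurd hp (hd p), fun i j j' h _ _ => absurd h (hd _),
      fun i i' j h _ _ => absurd h (hd _), fun i i' j k k' h _ _ _ _ => absurd h (hd _),
      fun i j j' k k' h _ _ _ _ => absurd h (hd _), fun i j j' k k' h _ _ _ _ => absurd h (hd _),
      fun p hp => absurd hp (hd p), fun p hp => absurd hp (hd p)⟩

lemma Qf_r_zero (n f : ℕ) (x z : ℕ → R) (b : ℤ → R) :
    Qflag n 1 (fun _ => 0) (fun _ => f) x z b = 1 := by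
  rw [Qflag]
  have : {T : ℕ × ℕ → MSTEntry | IsMST n 1 (fun _ => 0) (fun _ => f) T} =
      {fun _ => MSTEntry.unmarked 0} := Sset_r_zero n f
  rw [this, finsum_mem_singleton, mstWeight]
  simp

lemma Sset_n_zero (r f : ℕ) (hf : f = 0) : Sset 0 (r + 1) f = ∅ := by
  subst hf
  ext T
  simp only [Set.mem_empty_iff_false, iff_false]
  intro hT
  have hp : ((1 : ℕ), (1 : ℕ)) ∈ shiftedDiag 1 (fun _ => r + 1) := by
    rw [mem_shiftedDiag_one]; omega
  rcases entry_mem hT hp with ⟨k, h1, h2, _⟩ | ⟨k, h1, h2, _⟩ <;> omega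

lemma Qf_n_zero (r : ℕ) (x z : ℕ → R) (b : ℤ → R) :
    Qflag 0 1 (fun _ => r + 1) (fun _ => 0) x z b = 0 := by
  rw [Qflag]
  have : {T : ℕ × ℕ → MSTEntry | IsMST 0 1 (fun _ => r + 1) (fun _ => 0) T} =
      (∅ : Set (ℕ × ℕ → MSTEntry)) := Sset_n_zero r 0 rfl
  rw [this, finsum_mem_empty]

/-! ### The f-recursion -/

lemma le_circ_mono {e : MSTEntry} {f : ℕ} (h : e.le (.circ f)) : e.le (.circ (f + 1)) := by
  rcases h with h | ⟨h1, h2⟩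
  · exact Or.inl h
  · exact Or.inr ⟨h1, by simp only [MSTEntry.key] at h2 ⊢; omega⟩

/-- Append a circled `f+1` in the box `(1, r+1)`. -/
def eR1 (f r : ℕ) (T : ℕ × ℕ → MSTEntry) : ℕ × ℕ → MSTEntry :=
  fun q => if q.1 = 1 ∧ q.2 = r + 1 then MSTEntry.circ (f + 1) else T q

lemma eR1_apply_old (f r : ℕ) (T : ℕ × ℕ → MSTEntry) (q : ℕ × ℕ)
    (h : ¬(q.1 = 1 ∧ q.2 = r + 1)) : eR1 f r T q = T q := if_neg h

lemma eR1_apply_last (f r : ℕ) (T : ℕ × ℕ → MSTEntry) :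
    eR1 f r T (1, r + 1) = .circ (f + 1) := if_pos ⟨rfl, rfl⟩

lemma diag_mono {r : ℕ} {q : ℕ × ℕ} (h : q ∈ shiftedDiag 1 (fun _ => r)) :
    q ∈ shiftedDiag 1 (fun _ => r + 1) := by
  rw [mem_shiftedDiag_one] at h ⊢; omega

lemma eR1_isMST {n r f : ℕ} {T : ℕ × ℕ → MSTEntry} (hT : T ∈ Sset n r f) :
    eR1 f r T ∈ Sset n (r + 1) (f + 1) := by
  obtain ⟨h1, h2, h3, h4, h5, h6, h7, h8, h9⟩ := hT
  have hmem : ∀ q : ℕ × ℕ, q ∈ shiftedDiag 1 (fun _ => r + 1) →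
      (q.1 = 1 ∧ q.2 = r + 1) ∨ q ∈ shiftedDiag 1 (fun _ => r) := by
    intro q hq
    rw [mem_shiftedDiag_one] at hq
    by_cases h : q.2 = r + 1
    · exact Or.inl ⟨hq.1, h⟩
    · right; rw [mem_shiftedDiag_one]; omega
  -- value of eR1 on old boxes
  have hold : ∀ q ∈ shiftedDiag 1 (fun _ => r), eR1 f r T q = T q := by
    intro q hq
    rw [mem_shiftedDiag_one] at hq
    exact eR1_apply_old f r T q (by omega)
  have hlast : ∀ q : ℕ × ℕ, q.1 = 1 → q.2 = r + 1 → eR1 f r T q = .circ (f + 1) := by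
    intro q hq1 hq2
    exact if_pos ⟨hq1, hq2⟩
  refine ⟨?_, ?_, ?_, ?_, ?_, ?_, ?_, ?_, ?_⟩
  · -- normalized off the diagram
    intro q hq
    rw [eR1_apply_old f r T q, h1 q]
    · intro hq'; exact hq (diag_mono hq')
    · intro ⟨ha, hb⟩
      exact hq (by rw [mem_shiftedDiag_one]; omega)
  · -- values ≥ 1
    intro q hq
    rcases hmem q hq with h | h
    · rw [hlast q h.1 h.2]; simp [MSTEntry.val]
    · rw [hold q h]; exact h2 q h
  · -- weakly increasing in rows
    intro i j j' hj hj' hle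
    rcases hmem _ hj' with hn' | ho'
    · rw [hlast _ hn'.1 hn'.2]
      rcases hmem _ hj with hn | ho
      · rw [hlast _ hn.1 hn.2]; exact MSTEntry.le_rfl _
      · rw [hold _ ho]; exact le_circ_mono (h8 _ ho)
    · rcases hmem _ hj with hn | ho
      · -- left box is the new one, right is old: impossible since j ≤ j'
        rw [mem_shiftedDiag_one] at ho'
        simp only at hn ho'
        omega
      · rw [hold _ ho, hold _ ho']; exact h3 i j j' ho ho' hle
  · -- columns
    intro i i' j hj hj' hle
    have e1 : i = 1 := ((mem_shiftedDiag_one _ _).mp hj).1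
    have e2 : i' = 1 := ((mem_shiftedDiag_one _ _).mp hj').1
    subst e1; rw [e2]; exact MSTEntry.le_rfl _
  · intro i i' j k k' hj hj' hlt
    have e1 : i = 1 := ((mem_shiftedDiag_one _ _).mp hj).1
    have e2 : i' = 1 := ((mem_shiftedDiag_one _ _).mp hj').1
    omega
  · -- primes strictly increase
    intro i j j' k k' hj hj' hlt hk hk'
    rcases hmem _ hj' with hn' | ho'
    · rw [hlast _ hn'.1 hn'.2] at hk'; exact absurd hk' (by simp)
    · rcases hmem _ hj with hn | ho
      · rw [mem_shiftedDiag_one] at ho'; simp only at hn ho'; omega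
      · rw [hold _ ho] at hk; rw [hold _ ho'] at hk'
        exact h6 i j j' k k' ho ho' hlt hk hk'
  · -- circled strictly increase
    intro i j j' k k' hj hj' hlt hk hk'
    rcases hmem _ hj' with hn' | ho'
    · rw [hlast _ hn'.1 hn'.2] at hk'
      have hk'' : k' = f + 1 := by injection hk'.symm
      rcases hmem _ hj with hn | ho
      · rw [mem_shiftedDiag_one] at hj hj'; simp only at hn; omega
      · rw [hold _ ho] at hk
        have h8' : (T (i, j)).le (.circ f) := h8 _ ho
        rw [hk] at h8'
        have := circ_le_circ.mp h8'
        omega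
    · rcases hmem _ hj with hn | ho
      · rw [mem_shiftedDiag_one] at ho'; simp only at hn; omega
      · rw [hold _ ho] at hk; rw [hold _ ho'] at hk'
        exact h7 i j j' k k' ho ho' hlt hk hk'
  · -- flag
    intro q hq
    rcases hmem q hq with h | h
    · rw [hlast q h.1 h.2]; exact MSTEntry.le_rfl _
    · rw [hold q h]; exact le_circ_mono (h8 q h)
  · -- uncircled bounded by n
    intro q hq k hk
    rcases hmem q hq with h | h
    · rw [hlast q h.1 h.2] at hk
      rcases hk with hk | hk <;> exact absurd hk (by simp)
    · rw [hold q h] at hk; exact h9 q h k hk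

/-- Remove the entry in box `(1, r+1)`. -/
def tR1 (r : ℕ) (T : ℕ × ℕ → MSTEntry) : ℕ × ℕ → MSTEntry :=
  fun q => if q.1 = 1 ∧ q.2 = r + 1 then MSTEntry.unmarked 0 else T q

lemma tR1_isMST {n r f : ℕ} {T : ℕ × ℕ → MSTEntry} (hT : T ∈ Sset n (r + 1) (f + 1))
    (hlast : T (1, r + 1) = .circ (f + 1)) : tR1 r T ∈ Sset n r f := by
  obtain ⟨h1, h2, h3, h4, h5, h6, h7, h8, h9⟩ := hT
  have hold : ∀ q ∈ shiftedDiag 1 (fun _ => r), tR1 r T q = T q := by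
    intro q hq
    rw [mem_shiftedDiag_one] at hq
    exact if_neg (by omega)
  refine ⟨?_, ?_, ?_, ?_, ?_, ?_, ?_, ?_, ?_⟩
  · intro q hq
    by_cases hc : q.1 = 1 ∧ q.2 = r + 1
    · exact if_pos hc
    · rw [tR1, if_neg hc]
      apply h1
      intro hq'
      rw [mem_shiftedDiag_one] at hq hq'
      omega
  · intro q hq
    rw [hold q hq]
    exact h2 q (diag_mono hq)
  · intro i j j' hj hj' hle
    rw [hold _ hj, hold _ hj']
    exact h3 i j j' (diag_mono hj) (diag_mono hj') hle
  · intro i i' j hj hj' hle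
    have e1 : i = 1 := ((mem_shiftedDiag_one _ _).mp hj).1
    have e2 : i' = 1 := ((mem_shiftedDiag_one _ _).mp hj').1
    subst e1; rw [e2]; exact MSTEntry.le_rfl _
  · intro i i' j k k' hj hj' hlt
    have e1 : i = 1 := ((mem_shiftedDiag_one _ _).mp hj).1
    have e2 : i' = 1 := ((mem_shiftedDiag_one _ _).mp hj').1
    omega
  · intro i j j' k k' hj hj' hlt hk hk'
    rw [hold _ hj] at hk; rw [hold _ hj'] at hk'
    exact h6 i j j' k k' (diag_mono hj) (diag_mono hj') hlt hk hk'
  · intro i j j' k k' hj hj' hlt hk hk'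
    rw [hold _ hj] at hk; rw [hold _ hj'] at hk'
    exact h7 i j j' k k' (diag_mono hj) (diag_mono hj') hlt hk hk'
  · intro q hq
    rw [hold q hq]
    obtain ⟨hq1, hq2, hq3⟩ := (mem_shiftedDiag_one _ _).mp hq
    show (T q).le (.circ f)
    cases he : T q with
    | prime k => exact noncirc_le_circ.1
    | unmarked k => exact noncirc_le_circ.2
    | circ k =>
        have hqq : ((1 : ℕ), q.2) = q := by
          rw [← hq1]
        have hmem1 : ((1 : ℕ), q.2) ∈ shiftedDiag 1 (fun _ => r + 1) := by
          rw [mem_shiftedDiag_one]; omega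
        have hmem2 : ((1 : ℕ), r + 1) ∈ shiftedDiag 1 (fun _ => r + 1) := by
          rw [mem_shiftedDiag_one]; omega
        have := h7 1 q.2 (r + 1) k (f + 1) hmem1 hmem2 (by omega)
          (by rw [hqq]; exact he) hlast
        exact circ_le_circ.mpr (by omega)
  · intro q hq k hk
    rw [hold q hq] at hk
    exact h9 q (diag_mono hq) k hk

lemma bijOn_eR1 {n r f : ℕ} :
    Set.BijOn (eR1 f r) (Sset n r f)
      {T | T ∈ Sset n (r + 1) (f + 1) ∧ T (1, r + 1) = .circ (f + 1)} := by
  refine ⟨fun T hT => ⟨eR1_isMST hT, eR1_apply_last f r T⟩, ?_, ?_⟩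
  · intro T hT T' hT' h
    funext q
    by_cases hc : q.1 = 1 ∧ q.2 = r + 1
    · have hnd : q ∉ shiftedDiag 1 (fun _ => r) := by rw [mem_shiftedDiag_one]; omega
      rw [hT.1 q hnd, hT'.1 q hnd]
    · have := congrFun h q
      rwa [eR1_apply_old _ _ _ _ hc, eR1_apply_old _ _ _ _ hc] at this
  · rintro T ⟨hT, hlast⟩
    refine ⟨tR1 r T, tR1_isMST hT hlast, ?_⟩
    funext q
    by_cases hc : q.1 = 1 ∧ q.2 = r + 1
    · rw [eR1, if_pos hc]
      have hq : q = ((1 : ℕ), r + 1) := Prod.ext hc.1 hc.2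
      rw [hq]
      exact hlast.symm
    · rw [eR1_apply_old _ _ _ _ hc, tR1, if_neg hc]

lemma Sset_split (n r f : ℕ) :
    Sset n (r + 1) (f + 1) =
      {T | T ∈ Sset n (r + 1) (f + 1) ∧ T (1, r + 1) = .circ (f + 1)} ∪ Sset n (r + 1) f := by
  ext T
  simp only [Set.mem_union, Set.mem_setOf_eq]
  constructor
  · intro hT
    by_cases hc : T (1, r + 1) = .circ (f + 1)
    · exact Or.inl ⟨hT, hc⟩
    · right
      obtain ⟨h1, h2, h3, h4, h5, h6, h7, h8, h9⟩ := hT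
      refine ⟨h1, h2, h3, h4, h5, h6, h7, ?_, h9⟩
      intro q hq
      obtain ⟨hq1, hq2, hq3⟩ := (mem_shiftedDiag_one _ _).mp hq
      show (T q).le (.circ f)
      cases he : T q with
      | prime k => exact noncirc_le_circ.1
      | unmarked k => exact noncirc_le_circ.2
      | circ k =>
          have h8q : (MSTEntry.circ k).le (.circ (f + 1)) := by
            have := h8 q hq; rwa [he] at this
          have hk1 : k ≤ f + 1 := circ_le_circ.mp h8q
          have hk2 : k ≠ f + 1 := by
            intro hkf
            subst hkf
            have hqq : ((1 : ℕ), q.2) = q := by rw [← hq1]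
            by_cases hq4 : q.2 = r + 1
            · apply hc
              rw [← he, ← hqq, hq4]
            · have hmem1 : ((1 : ℕ), q.2) ∈ shiftedDiag 1 (fun _ => r + 1) := by
                rw [mem_shiftedDiag_one]; omega
              have hmem2 : ((1 : ℕ), r + 1) ∈ shiftedDiag 1 (fun _ => r + 1) := by
                rw [mem_shiftedDiag_one]; omega
              have h3' := h3 1 q.2 (r + 1) hmem1 hmem2 (by omega)
              rw [hqq, he] at h3'
              cases he' : T (1, r + 1) with
              | prime m =>
                  rw [he'] at h3'
                  rcases h3' with h | ⟨h, _⟩ <;> simp [MSTEntry.isCirc] at h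
              | unmarked m =>
                  rw [he'] at h3'
                  rcases h3' with h | ⟨h, _⟩ <;> simp [MSTEntry.isCirc] at h
              | circ m =>
                  rw [he'] at h3'
                  have hm1 : f + 1 ≤ m := by
                    rcases h3' with h | ⟨_, h⟩
                    · simp [MSTEntry.isCirc] at h
                    · simpa [MSTEntry.key] using h
                  have hm2 : m ≤ f + 1 := by
                    have hthis : (T (1, r + 1)).le (.circ (f + 1)) := h8 (1, r + 1) hmem2
                    rw [he'] at hthis
                    exact circ_le_circ.mp hthis
                  apply hc
                  rw [he', show m = f + 1 by omega]
          exact circ_le_circ.mpr (by omega)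
  · rintro (⟨h, _⟩ | hT)
    · exact h
    · obtain ⟨h1, h2, h3, h4, h5, h6, h7, h8, h9⟩ := hT
      exact ⟨h1, h2, h3, h4, h5, h6, h7, fun q hq => le_circ_mono (h8 q hq), h9⟩

lemma disj_R1 (n r f : ℕ) :
    Disjoint {T : ℕ × ℕ → MSTEntry | T ∈ Sset n (r + 1) (f + 1) ∧ T (1, r + 1) = .circ (f + 1)}
      (Sset n (r + 1) f) := by
  rw [Set.disjoint_left]
  rintro T ⟨hT, hlast⟩ hT'
  obtain ⟨-, -, -, -, -, -, -, h8, -⟩ := hT'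
  have hle : (T (1, r + 1)).le (.circ f) := h8 (1, r + 1) (by rw [mem_shiftedDiag_one]; omega)
  rw [hlast] at hle
  exact absurd (circ_le_circ.mp hle) (by omega)

lemma eR1_weight (n r f : ℕ) (x z : ℕ → R) (b : ℤ → R) (T : ℕ × ℕ → MSTEntry) :
    mstWeight 1 (fun _ => r + 1) x z b (eR1 f r T) =
      (z (f + 1) + bext b ((f : ℤ) + 1 - (r : ℤ))) * mstWeight 1 (fun _ => r) x z b T := by
  rw [mstWeight_one_row, mstWeight_one_row, Finset.prod_range_succ]
  have hlast : eR1 f r T (1, 1 + r) = .circ (f + 1) := if_pos ⟨rfl, by omega⟩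
  rw [hlast]
  have hfac : mstFactor x z b (1, 1 + r) (MSTEntry.circ (f + 1)) =
      z (f + 1) + bext b ((f : ℤ) + 1 - (r : ℤ)) := by
    simp only [mstFactor]
    congr 1
    push_cast
    ring
  rw [hfac, mul_comm]
  congr 1
  apply Finset.prod_congr rfl
  intro j hj
  have hj' := Finset.mem_range.mp hj
  rw [eR1_apply_old _ _ _ _ (by simp; omega)]

lemma Qf_rec_f (n r f : ℕ) (x z : ℕ → R) (b : ℤ → R) :
    Qflag n 1 (fun _ => r + 1) (fun _ => f + 1) x z b =
      Qflag n 1 (fun _ => r + 1) (fun _ => f) x z b +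
        (z (f + 1) + bext b ((f : ℤ) + 1 - (r : ℤ))) *
          Qflag n 1 (fun _ => r) (fun _ => f) x z b := by
  classical
  have hfin1 : ({T | T ∈ Sset n (r + 1) (f + 1) ∧
      T (1, r + 1) = MSTEntry.circ (f + 1)} : Set (ℕ × ℕ → MSTEntry)).Finite :=
    (Sset_finite n (r + 1) (f + 1)).subset (fun T hT => hT.1)
  have hfin2 := Sset_finite n (r + 1) f
  have hQ : Qflag n 1 (fun _ => r) (fun _ => f) x z b =
      ∑ T ∈ (Sset_finite n r f).toFinset, mstWeight 1 (fun _ => r) x z b T := by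
    rw [Qflag]
    exact finsum_mem_eq_finite_toFinset_sum _ (Sset_finite n r f)
  rw [Qflag]
  rw [show {T : ℕ × ℕ → MSTEntry | IsMST n 1 (fun _ => r + 1) (fun _ => f + 1) T} =
    {T | T ∈ Sset n (r + 1) (f + 1) ∧ T (1, r + 1) = .circ (f + 1)} ∪ Sset n (r + 1) f from
    Sset_split n r f]
  rw [finsum_mem_union (disj_R1 n r f) hfin1 hfin2]
  have hpart1 : ∑ᶠ T ∈ {T | T ∈ Sset n (r + 1) (f + 1) ∧ T (1, r + 1) = .circ (f + 1)},
      mstWeight 1 (fun _ => r + 1) x z b T =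
      (z (f + 1) + bext b ((f : ℤ) + 1 - (r : ℤ))) *
        Qflag n 1 (fun _ => r) (fun _ => f) x z b := by
    rw [← finsum_mem_eq_of_bijOn (eR1 f r) bijOn_eR1 (fun T _ => rfl)]
    rw [finsum_mem_eq_finite_toFinset_sum _ (Sset_finite n r f), hQ, Finset.mul_sum]
    apply Finset.sum_congr rfl
    intro T _
    exact eR1_weight n r f x z b T
  rw [hpart1]
  have hpart2 : ∑ᶠ T ∈ Sset n (r + 1) f, mstWeight 1 (fun _ => r + 1) x z b T =
      Qflag n 1 (fun _ => r + 1) (fun _ => f) x z b := by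
    rw [Qflag]; rfl
  rw [hpart2]
  ring

/-! ### The n-recursion (flag 0) -/

lemma diag_le {r r' : ℕ} (h : r ≤ r') :
    shiftedDiag 1 (fun _ => r) ⊆ shiftedDiag 1 (fun _ => r') := by
  intro q hq
  rw [mem_shiftedDiag_one] at hq ⊢
  omega

lemma bext_of_pos (b : ℤ → R) {j : ℤ} (h : 0 < j) : bext b j = b j := if_pos h

lemma entry_struct0 {n r : ℕ} {T : ℕ × ℕ → MSTEntry} (hT : T ∈ Sset n r 0) {p : ℕ × ℕ}
    (hp : p ∈ shiftedDiag 1 (fun _ => r)) :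
    ∃ k, 1 ≤ k ∧ k ≤ n ∧ (T p = .prime k ∨ T p = .unmarked k) := by
  rcases entry_mem hT hp with h | ⟨k, h1, h2, _⟩
  · exact h
  · omega

lemma val_le_of_le {a e : MSTEntry} (h : a.le e) (he : e.isCirc = 0) : a.val ≤ e.val := by
  cases a <;> cases e <;>
    simp only [MSTEntry.le, MSTEntry.isCirc, MSTEntry.key, MSTEntry.val] at h he ⊢ <;> omega

lemma val_mono0 {n r : ℕ} {T : ℕ × ℕ → MSTEntry} (hT : T ∈ Sset n r 0) {c c' : ℕ}
    (h1 : 1 ≤ c) (h2 : c ≤ c') (h3 : c' ≤ r) :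
    (T (1, c)).val ≤ (T (1, c')).val := by
  have hm : ((1 : ℕ), c) ∈ shiftedDiag 1 (fun _ => r) := by rw [mem_shiftedDiag_one]; omega
  have hm' : ((1 : ℕ), c') ∈ shiftedDiag 1 (fun _ => r) := by rw [mem_shiftedDiag_one]; omega
  have hle := hT.2.2.1 1 c c' hm hm' h2
  obtain ⟨k, _, _, hk | hk⟩ := entry_struct0 hT hm'
  · exact val_le_of_le hle (by rw [hk]; rfl)
  · exact val_le_of_le hle (by rw [hk]; rfl)

/-- The `p`-th class: entries in the first `p` columns have value `≤ n`, the rest value `n+1`. -/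
def Pcl (n p r : ℕ) (T : ℕ × ℕ → MSTEntry) : Prop :=
  ∀ c, 1 ≤ c → c ≤ r → ((T (1, c)).val ≤ n ↔ c ≤ p)

lemma cover_R4 (n r : ℕ) :
    Sset (n + 1) r 0 = ⋃ p ∈ (Finset.range (r + 1) : Set ℕ),
      {T | T ∈ Sset (n + 1) r 0 ∧ Pcl n p r T} := by
  ext T
  simp only [Set.mem_iUnion, Set.mem_setOf_eq, Finset.coe_range, Set.mem_Iio]
  constructor
  · intro hT
    classical
    set F := (Finset.Icc 1 r).filter (fun c => (T (1, c)).val ≤ n) with hF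
    by_cases hne : F.Nonempty
    · set p := F.max' hne with hp
      have hpF : p ∈ F := F.max'_mem hne
      rw [hF, Finset.mem_filter, Finset.mem_Icc] at hpF
      refine ⟨p, by omega, hT, ?_⟩
      intro c hc1 hc2
      constructor
      · intro hval
        apply Finset.le_max'
        rw [hF, Finset.mem_filter, Finset.mem_Icc]
        exact ⟨⟨hc1, hc2⟩, hval⟩
      · intro hcp
        calc (T (1, c)).val ≤ (T (1, p)).val := val_mono0 hT hc1 hcp hpF.1.2
          _ ≤ n := hpF.2
    · refine ⟨0, by omega, hT, ?_⟩
      intro c hc1 hc2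
      constructor
      · intro hval
        exfalso
        apply hne
        exact ⟨c, by rw [hF, Finset.mem_filter, Finset.mem_Icc]; exact ⟨⟨hc1, hc2⟩, hval⟩⟩
      · omega
  · rintro ⟨p, _, hT, _⟩
    exact hT

lemma pairwise_R4 (n r : ℕ) :
    (↑(Finset.range (r + 1)) : Set ℕ).PairwiseDisjoint
      (fun p => {T | T ∈ Sset (n + 1) r 0 ∧ Pcl n p r T}) := by
  intro p hp p' hp' hne
  simp only [Finset.coe_range, Set.mem_Iio] at hp hp'
  simp only [Function.onFun]
  rw [Set.disjoint_left]
  rintro T ⟨hT, hP⟩ ⟨hT', hP'⟩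
  rcases Nat.lt_or_ge p p' with h | h
  · have h1 := hP (p + 1) (by omega) (by omega)
    have h2 := hP' (p + 1) (by omega) (by omega)
    omega
  · have hlt : p' < p := by omega
    have h1 := hP (p' + 1) (by omega) (by omega)
    have h2 := hP' (p' + 1) (by omega) (by omega)
    omega

lemma S4_top (n r : ℕ) :
    {T | T ∈ Sset (n + 1) r 0 ∧ Pcl n r r T} = Sset n r 0 := by
  ext T
  simp only [Set.mem_setOf_eq]
  constructor
  · rintro ⟨hT, hP⟩
    obtain ⟨h1, h2, h3, h4, h5, h6, h7, h8, h9⟩ := hT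
    refine ⟨h1, h2, h3, h4, h5, h6, h7, h8, ?_⟩
    intro q hq k hk
    obtain ⟨hq1, hq2, hq3⟩ := (mem_shiftedDiag_one _ _).mp hq
    have hqq : ((1 : ℕ), q.2) = q := by rw [← hq1]
    have hval := (hP q.2 hq2 hq3).mpr hq3
    rw [hqq] at hval
    rcases hk with hk | hk <;> rw [hk] at hval <;> exact hval
  · intro hT
    obtain ⟨h1, h2, h3, h4, h5, h6, h7, h8, h9⟩ := hT
    refine ⟨⟨h1, h2, h3, h4, h5, h6, h7, h8, fun q hq k hk => le_trans (h9 q hq k hk) (by omega)⟩,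
      ?_⟩
    intro c hc1 hc2
    have hm : ((1 : ℕ), c) ∈ shiftedDiag 1 (fun _ => r) := by rw [mem_shiftedDiag_one]; omega
    obtain ⟨k, _, hkn, hk | hk⟩ := entry_struct0 ⟨h1, h2, h3, h4, h5, h6, h7, h8, h9⟩ hm <;>
      rw [hk] <;> simp only [MSTEntry.val] <;> omega

/-- Insert a block of `n+1`-valued entries in columns `p+1 … r`, `pat` first. -/
def e4 (pat : MSTEntry) (n p r : ℕ) (T : ℕ × ℕ → MSTEntry) : ℕ × ℕ → MSTEntry :=
  fun q => if q.1 = 1 ∧ p + 1 ≤ q.2 ∧ q.2 ≤ r then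
    (if q.2 = p + 1 then pat else .unmarked (n + 1)) else T q

lemma old_le_new {a e : MSTEntry} {k n : ℕ} (ha : a = .prime k ∨ a = .unmarked k) (hk : k ≤ n)
    (he : e = .prime (n + 1) ∨ e = .unmarked (n + 1)) : a.le e := by
  rcases ha with h | h <;> rcases he with h' | h' <;> subst h <;> subst h' <;>
    exact Or.inr ⟨rfl, by simp only [MSTEntry.key]; omega⟩

lemma pat_le_unm {e : MSTEntry} {n : ℕ} (he : e = .prime (n + 1) ∨ e = .unmarked (n + 1)) :
    e.le (.unmarked (n + 1)) := by
  rcases he with h | h <;> subst h <;>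
    exact Or.inr ⟨rfl, by simp only [MSTEntry.key]; omega⟩

lemma noncirc_le_circ' {e : MSTEntry} {n m : ℕ} (he : e = .prime n ∨ e = .unmarked n) :
    e.le (.circ m) := by
  rcases he with h | h <;> subst h
  exacts [noncirc_le_circ.1, noncirc_le_circ.2]

lemma e4_spec {n p r : ℕ} {pat : MSTEntry}
    (hpat : pat = .prime (n + 1) ∨ pat = .unmarked (n + 1)) (hplt : p < r)
    {T' : ℕ × ℕ → MSTEntry} (hT' : T' ∈ Sset n p 0) :
    e4 pat n p r T' ∈ Sset (n + 1) r 0 ∧ Pcl n p r (e4 pat n p r T') ∧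
      e4 pat n p r T' (1, p + 1) = pat := by
  obtain ⟨h1, h2, h3, h4, h5, h6, h7, h8, h9⟩ := hT'
  have hold : ∀ q : ℕ × ℕ, q.2 ≤ p ∨ ¬ q.1 = 1 → e4 pat n p r T' q = T' q := by
    intro q hq
    rw [e4, if_neg (by omega)]
  have hnew : ∀ q : ℕ × ℕ, q.1 = 1 → p + 1 ≤ q.2 → q.2 ≤ r →
      e4 pat n p r T' q = (if q.2 = p + 1 then pat else .unmarked (n + 1)) := by
    intro q hq1 hq2 hq3
    rw [e4, if_pos ⟨hq1, hq2, hq3⟩]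
  have hnewst : ∀ q : ℕ × ℕ, q.1 = 1 → p + 1 ≤ q.2 → q.2 ≤ r →
      e4 pat n p r T' q = .prime (n + 1) ∨ e4 pat n p r T' q = .unmarked (n + 1) := by
    intro q hq1 hq2 hq3
    rw [hnew q hq1 hq2 hq3]
    by_cases h : q.2 = p + 1
    · rw [if_pos h]; exact hpat
    · rw [if_neg h]; exact Or.inr rfl
  have hostr : ∀ q : ℕ × ℕ, q.1 = 1 → 1 ≤ q.2 → q.2 ≤ p →
      ∃ k, 1 ≤ k ∧ k ≤ n ∧ (T' q = .prime k ∨ T' q = .unmarked k) :=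
    fun q hq1 hq2 hq3 => entry_struct0 ⟨h1, h2, h3, h4, h5, h6, h7, h8, h9⟩
      (by rw [mem_shiftedDiag_one]; omega)
  refine ⟨⟨?_, ?_, ?_, ?_, ?_, ?_, ?_, ?_, ?_⟩, ?_, ?_⟩
  · -- normalization off the diagram
    intro q hq
    have hq' : ¬(q.1 = 1 ∧ p + 1 ≤ q.2 ∧ q.2 ≤ r) := by
      intro hc
      exact hq (by rw [mem_shiftedDiag_one]; omega)
    rw [e4, if_neg hq']
    exact h1 q (fun hmem => hq (diag_le (by omega) hmem))
  · -- values positive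
    intro q hq
    obtain ⟨hq1, hq2, hq3⟩ := (mem_shiftedDiag_one _ _).mp hq
    by_cases hc : q.2 ≤ p
    · rw [hold q (Or.inl hc)]
      exact h2 q (by rw [mem_shiftedDiag_one]; omega)
    · rcases hnewst q hq1 (by omega) hq3 with h | h <;> rw [h] <;> simp [MSTEntry.val]
  · -- weakly increasing along the row
    intro i j j' hj hj' hle
    have hi : i = 1 := ((mem_shiftedDiag_one _ _).mp hj).1
    subst hi
    have hj2 : 1 ≤ j := ((mem_shiftedDiag_one _ _).mp hj).2.1
    have hj3 : j ≤ r := ((mem_shiftedDiag_one _ _).mp hj).2.2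
    have hj2' : 1 ≤ j' := ((mem_shiftedDiag_one _ _).mp hj').2.1
    have hj3' : j' ≤ r := ((mem_shiftedDiag_one _ _).mp hj').2.2
    by_cases hc : j ≤ p
    · by_cases hc' : j' ≤ p
      · rw [hold (1, j) (Or.inl hc), hold (1, j') (Or.inl hc')]
        exact h3 1 j j' (by rw [mem_shiftedDiag_one]; omega)
          (by rw [mem_shiftedDiag_one]; omega) hle
      · rw [hold (1, j) (Or.inl hc)]
        obtain ⟨k, hk1, hk2, hk3⟩ := hostr (1, j) rfl (by omega) (by omega)
        exact old_le_new hk3 hk2 (hnewst (1, j') rfl (by omega) (by omega))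
    · rw [hnew (1, j) rfl (by omega) (by omega), hnew (1, j') rfl (by omega) (by omega)]
      by_cases hj1 : j = p + 1
      · rw [if_pos hj1]
        by_cases hj1' : j' = p + 1
        · rw [if_pos hj1']; exact MSTEntry.le_rfl pat
        · rw [if_neg hj1']; exact pat_le_unm hpat
      · rw [if_neg hj1, if_neg (by omega : ¬ j' = p + 1)]
        exact MSTEntry.le_rfl _
  · -- columns, weakly increasing
    intro i i' j hj hj' hle
    have e1 : i = 1 := ((mem_shiftedDiag_one _ _).mp hj).1
    have e2 : i' = 1 := ((mem_shiftedDiag_one _ _).mp hj').1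
    subst e1; rw [e2]; exact MSTEntry.le_rfl _
  · intro i i' j k k' hj hj' hlt
    have e1 : i = 1 := ((mem_shiftedDiag_one _ _).mp hj).1
    have e2 : i' = 1 := ((mem_shiftedDiag_one _ _).mp hj').1
    omega
  · -- primes strictly increase
    intro i j j' k k' hj hj' hlt hk hk'
    have hi : i = 1 := ((mem_shiftedDiag_one _ _).mp hj).1
    subst hi
    have hj2 : 1 ≤ j := ((mem_shiftedDiag_one _ _).mp hj).2.1
    have hj3 : j ≤ r := ((mem_shiftedDiag_one _ _).mp hj).2.2
    have hj3' : j' ≤ r := ((mem_shiftedDiag_one _ _).mp hj').2.2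
    by_cases hc' : j' ≤ p
    · rw [hold (1, j) (Or.inl (by omega))] at hk
      rw [hold (1, j') (Or.inl hc')] at hk'
      exact h6 1 j j' k k' (by rw [mem_shiftedDiag_one]; omega)
        (by rw [mem_shiftedDiag_one]; omega) hlt hk hk'
    · by_cases hjp : j' = p + 1
      · have hppat := hnew (1, j') rfl (by omega) (by omega)
        rw [if_pos hjp] at hppat
        rw [hppat] at hk'
        rcases hpat with hs | hs
        · rw [hs] at hk'
          injection hk' with hh
          by_cases hcj : j ≤ p
          · rw [hold (1, j) (Or.inl hcj)] at hk
            have := h9 (1, j) (by rw [mem_shiftedDiag_one]; omega) k (Or.inr hk)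
            omega
          · omega
        · rw [hs] at hk'
          exact absurd hk' (by simp)
      · have hppat := hnew (1, j') rfl (by omega) (by omega)
        rw [if_neg hjp] at hppat
        rw [hppat] at hk'
        exact absurd hk' (by simp)
  · -- circled strictly increase: no circled entries at all
    intro i j j' k k' hj hj' hlt hk hk'
    exfalso
    have hi : i = 1 := ((mem_shiftedDiag_one _ _).mp hj).1
    subst hi
    have hj2 : 1 ≤ j := ((mem_shiftedDiag_one _ _).mp hj).2.1
    have hj3 : j ≤ r := ((mem_shiftedDiag_one _ _).mp hj).2.2
    by_cases hc : j ≤ p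
    · rw [hold (1, j) (Or.inl hc)] at hk
      obtain ⟨k0, _, _, hs⟩ := hostr (1, j) rfl (by omega) (by omega)
      rcases hs with hs | hs <;> rw [hk] at hs <;> simp at hs
    · rcases hnewst (1, j) rfl (by omega) (by omega) with hs | hs <;> rw [hk] at hs <;>
        simp at hs
  · -- flag
    intro q hq
    show (e4 pat n p r T' q).le (.circ 0)
    obtain ⟨hq1, hq2, hq3⟩ := (mem_shiftedDiag_one _ _).mp hq
    by_cases hc : q.2 ≤ p
    · rw [hold q (Or.inl hc)]
      obtain ⟨k, _, _, hs⟩ := hostr q hq1 hq2 hc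
      exact noncirc_le_circ' hs
    · exact noncirc_le_circ' (hnewst q hq1 (by omega) hq3)
  · -- values bounded by n+1
    intro q hq k hk
    obtain ⟨hq1, hq2, hq3⟩ := (mem_shiftedDiag_one _ _).mp hq
    by_cases hc : q.2 ≤ p
    · rw [hold q (Or.inl hc)] at hk
      have := h9 q (by rw [mem_shiftedDiag_one]; omega) k hk
      omega
    · rcases hnewst q hq1 (by omega) hq3 with hs | hs <;> rw [hs] at hk
      · rcases hk with hk | hk
        · exact absurd hk (by simp)
        · injection hk with hh; omega
      · rcases hk with hk | hk
        · injection hk with hh; omega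
        · exact absurd hk (by simp)
  · -- class membership
    intro c hc1 hc2
    by_cases hc : c ≤ p
    · rw [hold (1, c) (Or.inl hc)]
      obtain ⟨k, _, hkn, hs⟩ := hostr (1, c) rfl hc1 hc
      rcases hs with hs | hs <;> rw [hs] <;> simp only [MSTEntry.val] <;> omega
    · rcases hnewst (1, c) rfl (by omega) hc2 with hs | hs <;> rw [hs] <;>
        simp only [MSTEntry.val] <;> omega
  · exact (hnew (1, p + 1) rfl (by omega) (by omega)).trans (if_pos rfl)

/-- Truncate to the first `p` columns. -/
def t4 (p r : ℕ) (T : ℕ × ℕ → MSTEntry) : ℕ × ℕ → MSTEntry :=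
  fun q => if q.1 = 1 ∧ p + 1 ≤ q.2 ∧ q.2 ≤ r then MSTEntry.unmarked 0 else T q

lemma not_unm_le_prime (m : ℕ) : ¬ (MSTEntry.unmarked (m + 1)).le (.prime (m + 1)) := by
  simp only [MSTEntry.le, MSTEntry.isCirc, MSTEntry.key]
  omega

lemma class_pat {n p r : ℕ} {T : ℕ × ℕ → MSTEntry} (hT : T ∈ Sset (n + 1) r 0)
    (hP : Pcl n p r T) (hplt : p < r) {c : ℕ} (hc1 : p + 1 ≤ c) (hc2 : c ≤ r) :
    T (1, c) = .prime (n + 1) ∨ T (1, c) = .unmarked (n + 1) := by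
  obtain ⟨k, hk1, hk2, hs⟩ := entry_struct0 hT
    (by rw [mem_shiftedDiag_one]; omega : ((1 : ℕ), c) ∈ shiftedDiag 1 (fun _ => r))
  have hval := hP c (by omega) hc2
  rcases hs with hs | hs <;> rw [hs] at hval ⊢ <;>
    simp only [MSTEntry.val] at hval
  · left; congr 1; omega
  · right; congr 1; omega

lemma t4_spec {n p r : ℕ} (hplt : p < r) {T : ℕ × ℕ → MSTEntry}
    (hT : T ∈ Sset (n + 1) r 0) (hP : Pcl n p r T) :
    t4 p r T ∈ Sset n p 0 := by
  obtain ⟨h1, h2, h3, h4, h5, h6, h7, h8, h9⟩ := hT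
  have hold : ∀ q : ℕ × ℕ, q ∈ shiftedDiag 1 (fun _ => p) → t4 p r T q = T q := by
    intro q hq
    rw [mem_shiftedDiag_one] at hq
    rw [t4, if_neg (by omega)]
  refine ⟨?_, ?_, ?_, ?_, ?_, ?_, ?_, ?_, ?_⟩
  · intro q hq
    by_cases hc : q.1 = 1 ∧ p + 1 ≤ q.2 ∧ q.2 ≤ r
    · exact if_pos hc
    · rw [t4, if_neg hc]
      apply h1
      intro hmem
      rw [mem_shiftedDiag_one] at hmem hq
      omega
  · intro q hq
    rw [hold q hq]
    exact h2 q (diag_le (by omega) hq)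
  · intro i j j' hj hj' hle
    rw [hold _ hj, hold _ hj']
    exact h3 i j j' (diag_le (by omega) hj) (diag_le (by omega) hj') hle
  · intro i i' j hj hj' hle
    have e1 : i = 1 := ((mem_shiftedDiag_one _ _).mp hj).1
    have e2 : i' = 1 := ((mem_shiftedDiag_one _ _).mp hj').1
    subst e1; rw [e2]; exact MSTEntry.le_rfl _
  · intro i i' j k k' hj hj' hlt
    have e1 : i = 1 := ((mem_shiftedDiag_one _ _).mp hj).1
    have e2 : i' = 1 := ((mem_shiftedDiag_one _ _).mp hj').1
    omega
  · intro i j j' k k' hj hj' hlt hk hk'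
    rw [hold _ hj] at hk; rw [hold _ hj'] at hk'
    exact h6 i j j' k k' (diag_le (by omega) hj) (diag_le (by omega) hj') hlt hk hk'
  · intro i j j' k k' hj hj' hlt hk hk'
    rw [hold _ hj] at hk; rw [hold _ hj'] at hk'
    exact h7 i j j' k k' (diag_le (by omega) hj) (diag_le (by omega) hj') hlt hk hk'
  · intro q hq
    rw [hold q hq]
    show (T q).le (.circ 0)
    exact h8 q (diag_le (by omega) hq)
  · intro q hq k hk
    rw [hold q hq] at hk
    obtain ⟨hq1, hq2, hq3⟩ := (mem_shiftedDiag_one _ _).mp hq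
    have hqq : ((1 : ℕ), q.2) = q := by rw [← hq1]
    have hval := (hP q.2 hq2 (by omega)).mpr hq3
    rw [hqq] at hval
    rcases hk with hk | hk <;> rw [hk] at hval <;> exact hval

lemma bijOn_e4 {n p r : ℕ} {pat : MSTEntry}
    (hpat : pat = .prime (n + 1) ∨ pat = .unmarked (n + 1)) (hplt : p < r) :
    Set.BijOn (e4 pat n p r) (Sset n p 0)
      {T | (T ∈ Sset (n + 1) r 0 ∧ Pcl n p r T) ∧ T (1, p + 1) = pat} := by
  refine ⟨?_, ?_, ?_⟩
  · intro T' hT'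
    obtain ⟨hm, hP, hp⟩ := e4_spec hpat hplt hT'
    exact ⟨⟨hm, hP⟩, hp⟩
  · intro T hT T' hT' h
    funext q
    by_cases hc : q.1 = 1 ∧ p + 1 ≤ q.2 ∧ q.2 ≤ r
    · have hnd : q ∉ shiftedDiag 1 (fun _ => p) := by rw [mem_shiftedDiag_one]; omega
      rw [hT.1 q hnd, hT'.1 q hnd]
    · have := congrFun h q
      rwa [e4, if_neg hc, e4, if_neg hc] at this
  · rintro T ⟨⟨hT, hP⟩, hppat⟩
    refine ⟨t4 p r T, t4_spec hplt hT hP, ?_⟩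
    funext q
    by_cases hc : q.1 = 1 ∧ p + 1 ≤ q.2 ∧ q.2 ≤ r
    · rw [e4, if_pos hc]
      obtain ⟨hc1, hc2, hc3⟩ := hc
      have hqq : ((1 : ℕ), q.2) = q := by rw [← hc1]
      by_cases hq2 : q.2 = p + 1
      · rw [if_pos hq2, ← hppat, ← hq2, hqq]
      · rw [if_neg hq2]
        rcases class_pat hT hP hplt hc2 hc3 with hs | hs
        · rw [hqq] at hs
          exfalso
          rcases hpat with hp' | hp'
          · have := hT.2.2.2.2.2.1 1 (p + 1) q.2 (n + 1) (n + 1)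
              (by rw [mem_shiftedDiag_one]; omega) (by rw [mem_shiftedDiag_one]; omega)
              (by omega) (by rw [hppat, hp']) (by rw [hqq]; exact hs)
            omega
          · have hle := hT.2.2.1 1 (p + 1) q.2
              (by rw [mem_shiftedDiag_one]; omega) (by rw [mem_shiftedDiag_one]; omega)
              (by omega)
            rw [hppat, hp', hqq, hs] at hle
            exact not_unm_le_prime n hle
        · rw [hqq] at hs
          exact hs.symm
    · rw [e4, if_neg hc, t4, if_neg hc]

lemma S4_split {n p r : ℕ} (hplt : p < r) :
    {T | T ∈ Sset (n + 1) r 0 ∧ Pcl n p r T} =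
      {T | (T ∈ Sset (n + 1) r 0 ∧ Pcl n p r T) ∧ T (1, p + 1) = .prime (n + 1)} ∪
      {T | (T ∈ Sset (n + 1) r 0 ∧ Pcl n p r T) ∧ T (1, p + 1) = .unmarked (n + 1)} := by
  ext T
  simp only [Set.mem_union, Set.mem_setOf_eq]
  constructor
  · intro hT
    rcases class_pat hT.1 hT.2 hplt (le_refl (p + 1)) (by omega) with h | h
    · exact Or.inl ⟨hT, h⟩
    · exact Or.inr ⟨hT, h⟩
  · rintro (⟨h, _⟩ | ⟨h, _⟩) <;> exact h

lemma S4_split_disj {n p r : ℕ} :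
    Disjoint {T : ℕ × ℕ → MSTEntry | (T ∈ Sset (n + 1) r 0 ∧ Pcl n p r T) ∧
        T (1, p + 1) = .prime (n + 1)}
      {T | (T ∈ Sset (n + 1) r 0 ∧ Pcl n p r T) ∧ T (1, p + 1) = .unmarked (n + 1)} := by
  rw [Set.disjoint_left]
  rintro T ⟨_, h1⟩ ⟨_, h2⟩
  rw [h1] at h2
  exact absurd h2 (by simp)

lemma e4_weight {n p r : ℕ} {pat : MSTEntry} (hplt : p < r) (x z : ℕ → R) (b : ℤ → R)
    (T' : ℕ × ℕ → MSTEntry) :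
    mstWeight 1 (fun _ => r) x z b (e4 pat n p r T') =
      (mstFactor x z b (1, 1 + p) pat *
        ∏ j ∈ Finset.Ico (p + 1) r, (x (n + 1) + bext b (j : ℤ))) *
      mstWeight 1 (fun _ => p) x z b T' := by
  rw [mstWeight_one_row, mstWeight_one_row, Finset.range_eq_Ico,
    ← Finset.prod_Ico_consecutive _ (Nat.zero_le p) (le_of_lt hplt)]
  have hfirst : (∏ j ∈ Finset.Ico 0 p,
      mstFactor x z b (1, 1 + j) (e4 pat n p r T' (1, 1 + j))) =
      ∏ j ∈ Finset.Ico 0 p, mstFactor x z b (1, 1 + j) (T' (1, 1 + j)) := by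
    apply Finset.prod_congr rfl
    intro j hj
    rw [Finset.mem_Ico] at hj
    rw [e4, if_neg (by omega)]
  have hsecond : (∏ j ∈ Finset.Ico p r,
      mstFactor x z b (1, 1 + j) (e4 pat n p r T' (1, 1 + j))) =
      mstFactor x z b (1, 1 + p) pat *
        ∏ j ∈ Finset.Ico (p + 1) r, (x (n + 1) + bext b (j : ℤ)) := by
    rw [Finset.prod_eq_prod_Ico_succ_bot hplt]
    have h1 : e4 pat n p r T' (1, 1 + p) = pat := by
      rw [e4, if_pos ⟨rfl, by omega, by omega⟩, if_pos (by omega)]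
    rw [h1]
    congr 1
    apply Finset.prod_congr rfl
    intro j hj
    rw [Finset.mem_Ico] at hj
    have h2 : e4 pat n p r T' (1, 1 + j) = .unmarked (n + 1) := by
      rw [e4, if_pos ⟨rfl, by omega, by omega⟩, if_neg (by omega)]
    rw [h2]
    simp only [mstFactor]
    congr 2
    push_cast
    ring
  rw [hfirst, hsecond, Finset.range_eq_Ico]
  ring

lemma classSum {n p r : ℕ} (hplt : p < r) (x z : ℕ → R) (b : ℤ → R) :
    ∑ᶠ T ∈ {T | T ∈ Sset (n + 1) r 0 ∧ Pcl n p r T}, mstWeight 1 (fun _ => r) x z b T =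
      (2 * x (n + 1) * ∏ j ∈ Finset.Ico (p + 1) r, (x (n + 1) + b (j : ℤ))) *
        Qflag n 1 (fun _ => p) (fun _ => 0) x z b := by
  classical
  have hfinP : ({T | (T ∈ Sset (n + 1) r 0 ∧ Pcl n p r T) ∧
      T (1, p + 1) = .prime (n + 1)} : Set (ℕ × ℕ → MSTEntry)).Finite :=
    (Sset_finite (n + 1) r 0).subset (fun T hT => hT.1.1)
  have hfinU : ({T | (T ∈ Sset (n + 1) r 0 ∧ Pcl n p r T) ∧
      T (1, p + 1) = .unmarked (n + 1)} : Set (ℕ × ℕ → MSTEntry)).Finite :=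
    (Sset_finite (n + 1) r 0).subset (fun T hT => hT.1.1)
  rw [S4_split hplt, finsum_mem_union S4_split_disj hfinP hfinU]
  have hQ : Qflag n 1 (fun _ => p) (fun _ => 0) x z b =
      ∑ T ∈ (Sset_finite n p 0).toFinset, mstWeight 1 (fun _ => p) x z b T := by
    rw [Qflag]
    exact finsum_mem_eq_finite_toFinset_sum _ (Sset_finite n p 0)
  have hpr : ∑ᶠ T ∈ {T | (T ∈ Sset (n + 1) r 0 ∧ Pcl n p r T) ∧
      T (1, p + 1) = .prime (n + 1)}, mstWeight 1 (fun _ => r) x z b T =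
      (mstFactor x z b (1, 1 + p) (.prime (n + 1)) *
        ∏ j ∈ Finset.Ico (p + 1) r, (x (n + 1) + bext b (j : ℤ))) *
        Qflag n 1 (fun _ => p) (fun _ => 0) x z b := by
    rw [← finsum_mem_eq_of_bijOn (e4 (.prime (n + 1)) n p r) (bijOn_e4 (Or.inl rfl) hplt)
      (fun T _ => rfl)]
    rw [finsum_mem_eq_finite_toFinset_sum _ (Sset_finite n p 0), hQ, Finset.mul_sum]
    exact Finset.sum_congr rfl (fun T _ => e4_weight hplt x z b T)
  have hun : ∑ᶠ T ∈ {T | (T ∈ Sset (n + 1) r 0 ∧ Pcl n p r T) ∧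
      T (1, p + 1) = .unmarked (n + 1)}, mstWeight 1 (fun _ => r) x z b T =
      (mstFactor x z b (1, 1 + p) (.unmarked (n + 1)) *
        ∏ j ∈ Finset.Ico (p + 1) r, (x (n + 1) + bext b (j : ℤ))) *
        Qflag n 1 (fun _ => p) (fun _ => 0) x z b := by
    rw [← finsum_mem_eq_of_bijOn (e4 (.unmarked (n + 1)) n p r) (bijOn_e4 (Or.inr rfl) hplt)
      (fun T _ => rfl)]
    rw [finsum_mem_eq_finite_toFinset_sum _ (Sset_finite n p 0), hQ, Finset.mul_sum]
    exact Finset.sum_congr rfl (fun T _ => e4_weight hplt x z b T)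
  rw [hpr, hun]
  have h1 : mstFactor x z b (1, 1 + p) (MSTEntry.prime (n + 1)) =
      x (n + 1) - bext b (p : ℤ) := by
    simp only [mstFactor]
    congr 2
    push_cast
    ring
  have h2 : mstFactor x z b (1, 1 + p) (MSTEntry.unmarked (n + 1)) =
      x (n + 1) + bext b (p : ℤ) := by
    simp only [mstFactor]
    congr 2
    push_cast
    ring
  have h3 : ∏ j ∈ Finset.Ico (p + 1) r, (x (n + 1) + bext b (j : ℤ)) =
      ∏ j ∈ Finset.Ico (p + 1) r, (x (n + 1) + b (j : ℤ)) := by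
    apply Finset.prod_congr rfl
    intro j hj
    rw [Finset.mem_Ico] at hj
    rw [bext_of_pos b (by omega : (0 : ℤ) < (j : ℤ))]
  rw [h1, h2, h3]
  ring

lemma Qf_rec_n (n r : ℕ) (x z : ℕ → R) (b : ℤ → R) :
    Qflag (n + 1) 1 (fun _ => r) (fun _ => 0) x z b =
      Qflag n 1 (fun _ => r) (fun _ => 0) x z b +
        ∑ p ∈ Finset.range r,
          (2 * x (n + 1) * ∏ j ∈ Finset.Ico (p + 1) r, (x (n + 1) + b (j : ℤ))) *
            Qflag n 1 (fun _ => p) (fun _ => 0) x z b := by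
  classical
  rw [Qflag, show {T : ℕ × ℕ → MSTEntry | IsMST (n + 1) 1 (fun _ => r) (fun _ => 0) T} =
    ⋃ p ∈ (Finset.range (r + 1) : Set ℕ), {T | T ∈ Sset (n + 1) r 0 ∧ Pcl n p r T} from
    cover_R4 n r]
  rw [finsum_mem_biUnion (pairwise_R4 n r) (Finset.range (r + 1)).finite_toSet
    (fun p _ => (Sset_finite (n + 1) r 0).subset (fun T hT => hT.1))]
  rw [finsum_mem_coe_finset, Finset.sum_range_succ]
  have hlast : ∑ᶠ T ∈ {T | T ∈ Sset (n + 1) r 0 ∧ Pcl n r r T},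
      mstWeight 1 (fun _ => r) x z b T = Qflag n 1 (fun _ => r) (fun _ => 0) x z b := by
    rw [S4_top n r, Qflag]
    rfl
  rw [hlast, Finset.sum_congr rfl (fun p hp => classSum (Finset.mem_range.mp hp) x z b)]
  ring

lemma base0 (x z : ℕ → R) (b : ℤ → R) : ∀ n r : ℕ,
    Qflag n 1 (fun _ => r) (fun _ => 0) x z b = Phi n x (fun i => b (i : ℤ)) r := by
  intro n
  induction n with
  | zero =>
      intro r
      cases r with
      | zero => rw [Qf_r_zero, Phi_zero]
      | succ r' => rw [Qf_n_zero, Phi_nil]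
  | succ n ih =>
      intro r
      have hsum : ∑ p ∈ Finset.range r,
          (2 * x (n + 1) * ∏ j ∈ Finset.Ico (p + 1) r, (x (n + 1) + b (j : ℤ))) *
            Qflag n 1 (fun _ => p) (fun _ => 0) x z b =
          ∑ p ∈ Finset.range r,
          (2 * x (n + 1) * ∏ j ∈ Finset.Ico (p + 1) r, (x (n + 1) + b (j : ℤ))) *
            Phi n x (fun i => b (i : ℤ)) p :=
        Finset.sum_congr rfl (fun p _ => by rw [ih p])
      rw [Qf_rec_n n r x z b, ih r, hsum]
      cases r with
      | zero => rw [Phi_zero, Phi_zero]; simp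
      | succ r' =>
          rw [Phi_succ n x (fun i => b (i : ℤ)) r', Finset.mul_sum]
          congr 1
          exact Finset.sum_congr rfl (fun p _ => by ring)

lemma mainQ (n : ℕ) (x z : ℕ → R) (b : ℤ → R) : ∀ f r : ℕ,
    Qflag n 1 (fun _ => r) (fun _ => f) x z b = RHSf n x z b r f := by
  intro f
  induction f with
  | zero =>
      intro r
      rw [RHSf_f_zero, base0]
  | succ f ih =>
      intro r
      cases r with
      | zero => rw [Qf_r_zero, RHSf_r_zero]
      | succ r' => rw [Qf_rec_f n r' f x z b, ih (r' + 1), ih r', RHSf_rec]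
end Aux5
/-- One-row case of the flagged factorial Q-function:
`Q_{(r),(f)}(x;z|b) = Σ_{k=0}^{f} q_{r−k}^{[r−k−1]}(x|b) · (e_k^{[f|k−f−1]}(z|τ^{k−r}b))^⋆`,
for every number `n` of x-variables. -/
theorem statement_5 (R : Type*) [CommRing R] (n r f : ℕ) (x z : ℕ → R) (b : ℤ → R) :
    Qflag n 1 (fun _ => r) (fun _ => f) x z b =
      ∑ k ∈ Finset.range (f + 1),
        qC ((r : ℤ) - (k : ℤ)) ((r : ℤ) - (k : ℤ) - 1) n x (fun i => b (i : ℤ)) *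
          eC2 (k : ℤ) (f : ℤ) ((k : ℤ) - (f : ℤ) - 1) z
            (fun i => bext b ((i : ℤ) + (k : ℤ) - (r : ℤ))) := by
  have hRHS : ∑ k ∈ Finset.range (f + 1),
      qC ((r : ℤ) - (k : ℤ)) ((r : ℤ) - (k : ℤ) - 1) n x (fun i => b (i : ℤ)) *
        eC2 (k : ℤ) (f : ℤ) ((k : ℤ) - (f : ℤ) - 1) z
          (fun i => bext b ((i : ℤ) + (k : ℤ) - (r : ℤ))) = Aux5.RHSf n x z b r f := by
    apply Finset.sum_congr rfl
    intro k hk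
    have hkf : k ≤ f := by have := Finset.mem_range.mp hk; omega
    rw [Aux5.qC_eq n x (fun i => b (i : ℤ)) r k, Aux5.eC2_eq_PsiV k f hkf z _]
  rw [hRHS]
  exact Aux5.mainQ n x z b f r
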